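/- Let h : ℝ^n → ℝ ∪ {+∞} be a proper function with convex domain whose interior is nonempty, and suppose h is uniformly quasiconvex on dom h with modulus φ. Let m ∈ ℕ with m ≥ 2, and assume that for each y ∈ ℝ^n, liminf_{‖x‖→+∞} φ(‖x − y‖)/‖x‖^m > 0. Then h is m-supercoercive, i.e., liminf_{‖x‖→+∞} h(x)/‖x‖^m > 0. -/

import Mathlib

noncomputable section

open Set Filter

/-- `φ : [0,∞) → [0,∞]` is a modulus: increasing and vanishing only at `0`. -/
def IsModulus (φ : ℝ → EReal) : Prop :=
  (∀ ⦃s t : ℝ⦄, 0 ≤ s → s ≤ t → φ s ≤ φ t) ∧ φ 0 = 0 ∧ (∀ t : ℝ, 0 < t → 0 < φ t)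

/-- `f` is uniformly quasiconvex on `C` with modulus `φ`. -/
def UnifQuasiconvexOn {E : Type*} [NormedAddCommGroup E] [NormedSpace ℝ E]
    (C : Set E) (φ : ℝ → EReal) (f : E → EReal) : Prop :=
  ∀ ⦃x⦄, x ∈ C → ∀ ⦃y⦄, y ∈ C → ∀ ⦃l : ℝ⦄, l ∈ Set.Icc (0 : ℝ) 1 →
    f (l • x + (1 - l) • y) + ((l * (1 - l) : ℝ) : EReal) * φ ‖x - y‖ ≤ max (f x) (f y)

set_option maxHeartbeats 2000000 in
/-- **m-supercoercivity.**  Let `h` be proper with convex domain having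
nonempty interior, uniformly quasiconvex on `dom h` with modulus `φ`, and let `m ≥ 2`.
If for each `y`, `liminf_{‖x‖→∞} φ(‖x − y‖)/‖x‖^m > 0`, then
`liminf_{‖x‖→∞} h(x)/‖x‖^m > 0`. -/
theorem statement_6 (n : ℕ) (h : EuclideanSpace ℝ (Fin n) → EReal)
    (hproper : ∃ x, h x ≠ ⊤) (hbot : ∀ x, h x ≠ ⊥)
    (hdomconv : Convex ℝ {x | h x ≠ ⊤})
    (hint : (interior {x | h x ≠ ⊤}).Nonempty)
    (φ : ℝ → EReal) (hφ : IsModulus φ)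
    (hquasi : UnifQuasiconvexOn {x | h x ≠ ⊤} φ h)
    (m : ℕ) (hm : 2 ≤ m)
    (hliminf : ∀ y : EuclideanSpace ℝ (Fin n),
      0 < Filter.liminf
        (fun x : EuclideanSpace ℝ (Fin n) => (((‖x‖ ^ m)⁻¹ : ℝ) : EReal) * φ ‖x - y‖)
        (Filter.comap (fun x : EuclideanSpace ℝ (Fin n) => ‖x‖) Filter.atTop)) :
    0 < Filter.liminf
      (fun x : EuclideanSpace ℝ (Fin n) => (((‖x‖ ^ m)⁻¹ : ℝ) : EReal) * h x)
      (Filter.comap (fun x : EuclideanSpace ℝ (Fin n) => ‖x‖) Filter.atTop) := by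
  classical
  rcases eq_or_neBot (Filter.comap (fun x : EuclideanSpace ℝ (Fin n) => ‖x‖) Filter.atTop)
    with hFbot | hFne
  · rw [hFbot, Filter.liminf_bot]; exact EReal.zero_lt_top
  -- φ is nonnegative on nonnegative reals
  have hφ0 : ∀ t : ℝ, 0 ≤ t → 0 ≤ φ t := fun t ht => hφ.2.1 ▸ hφ.1 le_rfl ht
  -- a unit vector
  have hmem : {x : EuclideanSpace ℝ (Fin n) | (1:ℝ) ≤ ‖x‖} ∈
      Filter.comap (fun x : EuclideanSpace ℝ (Fin n) => ‖x‖) Filter.atTop :=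
    Filter.preimage_mem_comap (Ici_mem_atTop 1)
  obtain ⟨x₁, hx₁⟩ := Filter.nonempty_of_mem hmem
  have hx₁0 : ‖x₁‖ ≠ 0 := by simp only [mem_setOf_eq] at hx₁; positivity
  set u : EuclideanSpace ℝ (Fin n) := ‖x₁‖⁻¹ • x₁ with hu_def
  have hu : ‖u‖ = 1 := by
    rw [hu_def, norm_smul, norm_inv, norm_norm, inv_mul_cancel₀ hx₁0]
  -- Step B : growth of φ
  obtain ⟨e, he0, heL⟩ := exists_between (hliminf 0)
  have hetop : e ≠ ⊤ := heL.ne_top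
  have hebot : e ≠ ⊥ := he0.ne_bot
  lift e to ℝ using ⟨hetop, hebot⟩ with c hc
  have hcpos : (0:ℝ) < c := by exact_mod_cast he0
  have hev := Filter.eventually_lt_of_lt_liminf heL
  rw [Filter.eventually_comap] at hev
  obtain ⟨R₀, hR₀⟩ := Filter.eventually_atTop.mp hev
  set R : ℝ := max R₀ 1 with hR_def
  have hR1 : (1:ℝ) ≤ R := le_max_right _ _
  have key : ∀ t : ℝ, R ≤ t → ((c * t ^ m : ℝ) : EReal) ≤ φ t := by
    intro t ht
    have h1t : (1:ℝ) ≤ t := le_trans hR1 ht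
    have h0t : (0:ℝ) < t := lt_of_lt_of_le one_pos h1t
    have hnorm : ‖t • u‖ = t := by
      rw [norm_smul, hu, mul_one, Real.norm_eq_abs, abs_of_pos h0t]
    have hlt := hR₀ t (le_trans (le_max_left _ _) ht) (t • u) hnorm
    rw [sub_zero, hnorm] at hlt
    have hb : (0:ℝ) < t ^ m := pow_pos h0t m
    calc ((c * t ^ m : ℝ) : EReal) = ((t ^ m : ℝ) : EReal) * (c : EReal) := by
          rw [← EReal.coe_mul]; norm_cast; ring
      _ ≤ ((t ^ m : ℝ) : EReal) * (((t ^ m)⁻¹ : ℝ) * φ t) :=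
          mul_le_mul_of_nonneg_left hlt.le (by exact_mod_cast hb.le)
      _ = ((t ^ m * (t ^ m)⁻¹ : ℝ) : EReal) * φ t := by
          rw [EReal.coe_mul, mul_assoc]
      _ = φ t := by rw [mul_inv_cancel₀ hb.ne']; simp
  -- Step C : a ball on which h is bounded above, via Baire
  set D : ℕ → Set (EuclideanSpace ℝ (Fin n)) :=
    fun k => {x | h x ≠ ⊤ ∧ h x ≤ ((k : ℝ) : EReal)} with hD_def
  have hDconv : ∀ k, Convex ℝ (D k) := by
    intro k x hx y hy a b ha hb hab
    have hb' : b = 1 - a := by linarith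
    subst hb'
    have hz : h (a • x + (1 - a) • y) ≠ ⊤ :=
      hdomconv hx.1 hy.1 ha hb hab
    refine ⟨hz, ?_⟩
    have h2 := hquasi hx.1 hy.1 (⟨ha, by linarith⟩ : a ∈ Set.Icc (0:ℝ) 1)
    have hterm : (0:EReal) ≤ ((a * (1 - a) : ℝ) : EReal) * φ ‖x - y‖ :=
      mul_nonneg (by exact_mod_cast mul_nonneg ha hb) (hφ0 _ (norm_nonneg _))
    exact (le_add_of_nonneg_right hterm).trans (h2.trans (max_le hx.2 hy.2))
  have hcover : {x | h x ≠ ⊤} ⊆ ⋃ k, D k := by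
    intro x hx
    have hr : ((h x).toReal : EReal) = h x := EReal.coe_toReal hx (hbot x)
    refine Set.mem_iUnion.mpr ⟨⌈(h x).toReal⌉₊, hx, ?_⟩
    rw [← hr]
    exact_mod_cast Nat.le_ceil _
  have hbaire : ∃ k, (interior (closure (D k))).Nonempty := by
    by_contra hcon
    push_neg at hcon
    have hnd : ∀ k, IsNowhereDense (D k) := fun k => hcon k
    have hmgk : ∀ k, IsMeagre (D k) := fun k =>
      isMeagre_iff_countable_union_isNowhereDense.mpr
        ⟨{D k}, by simpa using hnd k, countable_singleton _, by simp⟩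
    have hmg : IsMeagre (⋃ k, D k) := isMeagre_iUnion hmgk
    have hmgU : IsMeagre (interior {x | h x ≠ ⊤}) :=
      hmg.mono (interior_subset.trans hcover)
    have hd : Dense (interior {x | h x ≠ ⊤})ᶜ := dense_of_mem_residual hmgU
    obtain ⟨w, hw1, hw2⟩ := hd.exists_mem_open isOpen_interior hint
    exact hw1 hw2
  obtain ⟨k₀, hk₀⟩ := hbaire
  have hspanc : affineSpan ℝ (closure (D k₀)) = ⊤ :=
    ((hDconv k₀).closure.interior_nonempty_iff_affineSpan_eq_top).mp hk₀
  have hspan : affineSpan ℝ (D k₀) = ⊤ := by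
    have hsub : closure (D k₀) ⊆ (affineSpan ℝ (D k₀) : Set (EuclideanSpace ℝ (Fin n))) :=
      closure_minimal (subset_affineSpan ℝ _)
        (affineSpan ℝ (D k₀)).closed_of_finiteDimensional
    have hle : affineSpan ℝ (closure (D k₀)) ≤ affineSpan ℝ (D k₀) :=
      affineSpan_le.mpr hsub
    rw [hspanc] at hle
    exact top_le_iff.mp hle
  have hintD : (interior (D k₀)).Nonempty :=
    ((hDconv k₀).interior_nonempty_iff_affineSpan_eq_top).mpr hspan
  obtain ⟨z₀, hz₀⟩ := hintD
  obtain ⟨ρ, hρpos, hρ⟩ := Metric.isOpen_iff.mp isOpen_interior z₀ hz₀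
  set ρ' : ℝ := ρ / 2 with hρ'_def
  have hρ'pos : (0:ℝ) < ρ' := by positivity
  have hball : ∀ w : EuclideanSpace ℝ (Fin n), ‖w - z₀‖ ≤ ρ' → w ∈ D k₀ := by
    intro w hw
    refine interior_subset (hρ ?_)
    rw [Metric.mem_ball, dist_eq_norm]
    calc ‖w - z₀‖ ≤ ρ' := hw
      _ < ρ := by rw [hρ'_def]; linarith
  have hz₀D : z₀ ∈ D k₀ := interior_subset hz₀
  have hz₀dom : h z₀ ≠ ⊤ := hz₀D.1
  set a : ℝ := (h z₀).toReal with ha_def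
  have ha : ((a : ℝ) : EReal) = h z₀ := EReal.coe_toReal hz₀dom (hbot z₀)
  -- Step D : h x ≥ a for x far from z₀
  set R₁ : ℝ := max R (max 1 ((k₀ + 1 + |a|) / (c * ρ'))) with hR₁_def
  have hR₁R : R ≤ R₁ := le_max_left _ _
  have hR₁1 : (1:ℝ) ≤ R₁ := le_trans (le_max_left _ _) (le_max_right _ _)
  have hcoer1 : ∀ x : EuclideanSpace ℝ (Fin n), R₁ ≤ ‖x - z₀‖ → ((a : ℝ) : EReal) ≤ h x := by
    intro x hx
    by_cases hxdom : h x = ⊤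
    · rw [hxdom]; exact le_top
    set d : ℝ := ‖x - z₀‖ with hd_def
    have hd1 : (1:ℝ) ≤ d := le_trans hR₁1 hx
    have hdR : R ≤ d := le_trans hR₁R hx
    have hdpos : (0:ℝ) < d := lt_of_lt_of_le one_pos hd1
    set y : EuclideanSpace ℝ (Fin n) := z₀ - (ρ' / d) • (x - z₀) with hy_def
    have hydist : ‖y - z₀‖ = ρ' := by
      have : y - z₀ = -((ρ' / d) • (x - z₀)) := by rw [hy_def]; abel
      rw [this, norm_neg, norm_smul, Real.norm_eq_abs, ← hd_def,
        abs_of_pos (by positivity), div_mul_cancel₀ _ hdpos.ne']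
    have hy : y ∈ D k₀ := hball y hydist.le
    set l : ℝ := ρ' / (ρ' + d) with hl_def
    have hρd : (0:ℝ) < ρ' + d := by linarith
    have hl : l ∈ Set.Icc (0:ℝ) 1 := by
      constructor
      · positivity
      · rw [hl_def, div_le_one hρd]; linarith
    have hcomb : l • x + (1 - l) • y = z₀ := by
      rw [hy_def, hl_def]
      match_scalars <;> (field_simp; try ring)
    have hxy : ‖x - y‖ = d + ρ' := by
      have hxyv : x - y = (1 + ρ' / d) • (x - z₀) := by
        rw [hy_def]; module
      rw [hxyv, norm_smul, Real.norm_eq_abs, ← hd_def,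
        abs_of_pos (by positivity)]
      field_simp
    have hq := hquasi hxdom hy.1 hl
    rw [hcomb, hxy] at hq
    have hφlb : ((c * (d + ρ') ^ m : ℝ) : EReal) ≤ φ (d + ρ') :=
      key _ (by linarith)
    have hl1l : (0:ℝ) ≤ l * (1 - l) := mul_nonneg hl.1 (by linarith [hl.2])
    have hterm : ((l * (1 - l) * (c * (d + ρ') ^ m) : ℝ) : EReal) ≤
        ((l * (1 - l) : ℝ) : EReal) * φ (d + ρ') := by
      rw [EReal.coe_mul]
      exact mul_le_mul_of_nonneg_left hφlb (by exact_mod_cast hl1l)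
    have hreal : c * ρ' * d ≤ l * (1 - l) * (c * (d + ρ') ^ m) := by
      obtain ⟨j, rfl⟩ : ∃ j, m = 2 + j := ⟨m - 2, by omega⟩
      have h1l : 1 - l = d / (ρ' + d) := by
        rw [hl_def]; field_simp; ring
      have heq : l * (1 - l) * (c * (d + ρ') ^ (2 + j)) = c * ρ' * d * (d + ρ') ^ j := by
        rw [hl_def, h1l, pow_add]
        have : (d + ρ') ^ 2 = (ρ' + d) ^ 2 := by ring
        rw [this]
        field_simp
      rw [heq]
      have hone : (1:ℝ) ≤ (d + ρ') ^ j := one_le_pow₀ (by linarith)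
      exact le_mul_of_one_le_right (by positivity) hone
    have hmax : ((a + c * ρ' * d : ℝ) : EReal) ≤ max (h x) (h y) := by
      calc ((a + c * ρ' * d : ℝ) : EReal) = ((a:ℝ):EReal) + ((c * ρ' * d : ℝ) : EReal) := by
            rw [← EReal.coe_add]
        _ ≤ h z₀ + ((l * (1 - l) : ℝ) : EReal) * φ (d + ρ') := by
            apply add_le_add
            · exact ha.le
            · exact le_trans (by exact_mod_cast hreal) hterm
        _ ≤ max (h x) (h y) := hq
    have hklt : ((k₀ : ℝ) : EReal) < ((a + c * ρ' * d : ℝ) : EReal) := by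
      have hcρ' : (0:ℝ) < c * ρ' := mul_pos hcpos hρ'pos
      have hdge : (k₀ + 1 + |a|) / (c * ρ') ≤ d :=
        le_trans (le_trans (le_max_right _ _) (le_max_right _ _)) hx
      have : k₀ + 1 + |a| ≤ c * ρ' * d := by
        rw [div_le_iff₀ hcρ'] at hdge
        linarith [mul_comm (c * ρ') d]
      have h2 : (k₀:ℝ) < a + c * ρ' * d := by linarith [neg_abs_le a]
      exact_mod_cast h2
    have hxge : ((a + c * ρ' * d : ℝ) : EReal) ≤ h x := by
      rcases le_max_iff.mp hmax with h1 | h1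
      · exact h1
      · exact absurd (h1.trans hy.2) (not_le.mpr hklt)
    refine le_trans ?_ hxge
    have h3 : a ≤ a + c * ρ' * d := by nlinarith [mul_pos (mul_pos hcpos hρ'pos) hdpos]
    exact EReal.coe_le_coe_iff.mpr h3
  -- Step E : final supercoercivity
  set ε : ℝ := c / 2 ^ (m + 3) with hε_def
  have hεpos : (0:ℝ) < ε := by positivity
  set R₂ : ℝ := max (2 * ‖z₀‖ + 4 * R₁ + 2) (2 ^ (m + 3) * (|a| + 1) / c) with hR₂_def
  have hfinal : ∀ x : EuclideanSpace ℝ (Fin n), R₂ ≤ ‖x‖ →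
      ((ε : ℝ) : EReal) ≤ (((‖x‖ ^ m)⁻¹ : ℝ) : EReal) * h x := by
    intro x hxR
    have hx1 : (1:ℝ) ≤ ‖x‖ := by
      have : 2 * ‖z₀‖ + 4 * R₁ + 2 ≤ ‖x‖ := le_trans (le_max_left _ _) hxR
      nlinarith [norm_nonneg z₀, hR₁1]
    have hxm0 : (0:ℝ) < ‖x‖ ^ m := by positivity
    by_cases hxdom : h x = ⊤
    · rw [hxdom, EReal.mul_top_of_pos (by exact_mod_cast by positivity : (0:EReal) < (((‖x‖ ^ m)⁻¹ : ℝ) : EReal))]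
      exact le_top
    set d : ℝ := ‖x - z₀‖ with hd_def
    have hdx : ‖x‖ / 2 ≤ d := by
      have h1 : ‖x‖ - ‖z₀‖ ≤ d := by
        rw [hd_def]; exact norm_sub_norm_le x z₀
      have h2 : 2 * ‖z₀‖ ≤ ‖x‖ := by
        have := le_trans (le_max_left _ _) hxR
        nlinarith [hR₁1]
      linarith
    have hd2R₁ : 2 * R₁ ≤ d := by
      have := le_trans (le_max_left _ _) hxR
      have : ‖z₀‖ + 2 * R₁ + 1 ≤ ‖x‖ / 2 := by nlinarith [norm_nonneg z₀]
      linarith [norm_nonneg z₀]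
    have hdR : R ≤ d := by linarith [hR₁R, hR₁1]
    have hd1 : (1:ℝ) ≤ d := by linarith [hR₁1]
    -- midpoint
    have hhalf : (1/2 : ℝ) ∈ Set.Icc (0:ℝ) 1 := by norm_num
    have hq := hquasi hxdom hz₀dom hhalf
    rw [← hd_def] at hq
    have hmidd : ‖((1:ℝ)/2) • x + (1 - (1:ℝ)/2) • z₀ - z₀‖ = d / 2 := by
      have : ((1:ℝ)/2) • x + (1 - (1:ℝ)/2) • z₀ - z₀ = ((1:ℝ)/2) • (x - z₀) := by module
      rw [this, norm_smul, ← hd_def, Real.norm_eq_abs,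
        abs_of_pos (by norm_num : (0:ℝ) < 1/2)]
      ring
    have hmid : ((a : ℝ) : EReal) ≤ h (((1:ℝ)/2) • x + (1 - (1:ℝ)/2) • z₀) :=
      hcoer1 _ (by rw [hmidd]; linarith)
    have hφd : ((c * d ^ m : ℝ) : EReal) ≤ φ d := key d hdR
    have hterm : (((1:ℝ)/4 * (c * d ^ m) : ℝ) : EReal) ≤
        (((1:ℝ)/2 * (1 - (1:ℝ)/2) : ℝ) : EReal) * φ d := by
      have h14 : ((1:ℝ)/2 * (1 - (1:ℝ)/2)) = (1:ℝ)/4 := by norm_num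
      rw [h14, EReal.coe_mul]
      exact mul_le_mul_of_nonneg_left hφd (by norm_num)
    have hmax : ((a + 1/4 * (c * d ^ m) : ℝ) : EReal) ≤ max (h x) (h z₀) := by
      calc ((a + 1/4 * (c * d ^ m) : ℝ) : EReal)
          = ((a:ℝ):EReal) + (((1:ℝ)/4 * (c * d ^ m) : ℝ) : EReal) := by rw [← EReal.coe_add]
        _ ≤ h (((1:ℝ)/2) • x + (1 - (1:ℝ)/2) • z₀) +
            (((1:ℝ)/2 * (1 - (1:ℝ)/2) : ℝ) : EReal) * φ d := add_le_add hmid hterm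
        _ ≤ max (h x) (h z₀) := hq
    have hpos4 : (0:ℝ) < 1/4 * (c * d ^ m) := by positivity
    have hxge : ((a + 1/4 * (c * d ^ m) : ℝ) : EReal) ≤ h x := by
      rcases le_max_iff.mp hmax with h1 | h1
      · exact h1
      · exfalso
        rw [← ha] at h1
        have : a + 1/4 * (c * d ^ m) ≤ a := by exact_mod_cast h1
        linarith
    -- real arithmetic : ε * ‖x‖^m ≤ a + c*d^m/4
    have hrr : ε * ‖x‖ ^ m ≤ a + 1/4 * (c * d ^ m) := by
      have hpow : (‖x‖ / 2) ^ m ≤ d ^ m :=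
        pow_le_pow_left₀ (by positivity) hdx m
      have hdivpow : (‖x‖ / 2) ^ m = ‖x‖ ^ m / 2 ^ m := div_pow _ _ _
      have h2m : (2:ℝ) ^ (m + 3) = 2 ^ m * 8 := by rw [pow_add]; norm_num
      have hxm : ‖x‖ ≤ ‖x‖ ^ m := le_self_pow₀ hx1 (by omega)
      have hxa : 2 ^ (m + 3) * (|a| + 1) / c ≤ ‖x‖ := le_trans (le_max_right _ _) hxR
      have haε : |a| + 1 ≤ ε * ‖x‖ := by
        rw [div_le_iff₀ hcpos] at hxa
        rw [hε_def]
        rw [div_mul_eq_mul_div, le_div_iff₀ (by positivity : (0:ℝ) < 2 ^ (m+3))]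
        nlinarith
      have hεx : |a| + 1 ≤ ε * ‖x‖ ^ m := by
        have : ε * ‖x‖ ≤ ε * ‖x‖ ^ m := by nlinarith
        linarith
      have hmain : 2 * (ε * ‖x‖ ^ m) ≤ 1/4 * (c * d ^ m) := by
        have h1 : ‖x‖ ^ m / 2 ^ m ≤ d ^ m := by rw [← hdivpow]; exact hpow
        have h2mpos : (0:ℝ) < 2 ^ m := by positivity
        have h3 : c * (‖x‖ ^ m / 2 ^ m) ≤ c * d ^ m :=
          mul_le_mul_of_nonneg_left h1 hcpos.le
        have h4 : ε * ‖x‖ ^ m = c * (‖x‖ ^ m / 2 ^ m) / 8 := by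
          rw [hε_def, h2m]
          field_simp
        rw [h4]
        linarith
      nlinarith [neg_abs_le a]
    have hcoe : ((ε * ‖x‖ ^ m : ℝ) : EReal) ≤ h x :=
      le_trans (by exact_mod_cast hrr) hxge
    calc ((ε : ℝ) : EReal) = (((‖x‖ ^ m)⁻¹ * (ε * ‖x‖ ^ m) : ℝ) : EReal) := by
          congr 1
          field_simp
      _ = (((‖x‖ ^ m)⁻¹ : ℝ) : EReal) * ((ε * ‖x‖ ^ m : ℝ) : EReal) := EReal.coe_mul _ _
      _ ≤ (((‖x‖ ^ m)⁻¹ : ℝ) : EReal) * h x :=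
          mul_le_mul_of_nonneg_left hcoe (by exact_mod_cast inv_nonneg.mpr hxm0.le)
  have hev2 : ∀ᶠ x in Filter.comap (fun x : EuclideanSpace ℝ (Fin n) => ‖x‖) Filter.atTop,
      ((ε : ℝ) : EReal) ≤ (((‖x‖ ^ m)⁻¹ : ℝ) : EReal) * h x := by
    have hmem2 : {x : EuclideanSpace ℝ (Fin n) | R₂ ≤ ‖x‖} ∈
        Filter.comap (fun x : EuclideanSpace ℝ (Fin n) => ‖x‖) Filter.atTop :=
      Filter.preimage_mem_comap (Ici_mem_atTop R₂)
    exact Filter.eventually_iff.mpr (Filter.mem_of_superset hmem2 hfinal)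
  have hle := Filter.le_liminf_of_le (by isBoundedDefault) hev2
  exact lt_of_lt_of_le (by exact_mod_cast hεpos) hle
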